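/- Let (Σ, d) be a metric space in which d(x,y) ≤ π for all x, y ∈ Σ. Define D on Σ × [0,∞) by D((x,t),(y,s)) = √(t² + s² − 2ts·cos(d(x,y))). Then D is a pseudometric (it is nonnegative, symmetric, and satisfies the triangle inequality), and D((x,t),(y,s)) = 0 if and only if t = s and either t = 0 or x = y. In particular, D descends to a metric on the cone Σ × [0,∞)/(Σ × {0}). -/

import Mathlib

open NNReal

/-- The cone distance on `Σ × [0,∞)`:
`D((x,t),(y,s)) = √(t² + s² − 2ts·cos d(x,y))`. -/
noncomputable def coneDist {S : Type*} [MetricSpace S]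
    (p q : S × ℝ≥0) : ℝ :=
  Real.sqrt ((p.2 : ℝ) ^ 2 + (q.2 : ℝ) ^ 2 -
    2 * (p.2 : ℝ) * (q.2 : ℝ) * Real.cos (dist p.1 q.1))

private lemma sqrt_eq_cabs (t u β : ℝ) :
    Real.sqrt (t^2 + u^2 - 2*t*u*Real.cos β)
      = ‖(t:ℂ) - u * Complex.exp (β * Complex.I)‖ := by
  rw [Complex.norm_def, Complex.normSq_apply, Complex.exp_mul_I,
    ← Complex.ofReal_cos, ← Complex.ofReal_sin]
  have h1 : ((t:ℂ) - u * ((Real.cos β:ℂ) + (Real.sin β:ℂ) * Complex.I)).re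
      = t - u * Real.cos β := by simp [Complex.cos_ofReal_re]
  have h2 : ((t:ℂ) - u * ((Real.cos β:ℂ) + (Real.sin β:ℂ) * Complex.I)).im
      = -(u * Real.sin β) := by simp [Complex.sin_ofReal_re]
  rw [h1, h2]
  congr 1
  nlinarith [Real.sin_sq_add_cos_sq β]

private lemma coneAux_mono (t s : ℝ) (ht : 0 ≤ t) (hs : 0 ≤ s) {a b : ℝ}
    (ha : 0 ≤ a) (hb : b ≤ Real.pi) (hab : a ≤ b) :
    Real.sqrt (t^2 + s^2 - 2*t*s*Real.cos a)
      ≤ Real.sqrt (t^2 + s^2 - 2*t*s*Real.cos b) := by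
  apply Real.sqrt_le_sqrt
  have hc : Real.cos b ≤ Real.cos a :=
    Real.cos_le_cos_of_nonneg_of_le_pi ha hb hab
  nlinarith [mul_nonneg ht hs]

private lemma coneDist_symm {S : Type*} [MetricSpace S] (p q : S × ℝ≥0) :
    coneDist p q = coneDist q p := by
  unfold coneDist
  rw [dist_comm]
  ring_nf

private lemma coneDist_triangle' {S : Type*} [MetricSpace S]
    (hdiam : ∀ x y : S, dist x y ≤ Real.pi) (p q r : S × ℝ≥0) :
    coneDist p r ≤ coneDist p q + coneDist q r := by
  set t := (p.2 : ℝ) with htdef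
  set u := (q.2 : ℝ) with hudef
  set s := (r.2 : ℝ) with hsdef
  set β1 := dist p.1 q.1 with hb1
  set β2 := dist q.1 r.1 with hb2
  set γ := dist p.1 r.1 with hg
  have ht : (0:ℝ) ≤ t := (p.2).coe_nonneg
  have hu : (0:ℝ) ≤ u := (q.2).coe_nonneg
  have hs : (0:ℝ) ≤ s := (r.2).coe_nonneg
  have hγ0 : 0 ≤ γ := dist_nonneg
  have hγπ : γ ≤ Real.pi := hdiam _ _
  have hγtri : γ ≤ β1 + β2 := dist_triangle _ _ _
  have hb10 : 0 ≤ β1 := dist_nonneg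
  have hb20 : 0 ≤ β2 := dist_nonneg
  have hb1π : β1 ≤ Real.pi := hdiam _ _
  have hb2π : β2 ≤ Real.pi := hdiam _ _
  show Real.sqrt (t^2 + s^2 - 2*t*s*Real.cos γ)
      ≤ Real.sqrt (t^2 + u^2 - 2*t*u*Real.cos β1)
        + Real.sqrt (u^2 + s^2 - 2*u*s*Real.cos β2)
  by_cases hcase : β1 + β2 ≤ Real.pi
  · have h1 : Real.sqrt (t^2 + s^2 - 2*t*s*Real.cos γ)
        ≤ Real.sqrt (t^2 + s^2 - 2*t*s*Real.cos (β1 + β2)) :=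
      coneAux_mono t s ht hs hγ0 hcase hγtri
    refine h1.trans ?_
    rw [sqrt_eq_cabs t s (β1+β2), sqrt_eq_cabs t u β1, sqrt_eq_cabs u s β2]
    have key : ‖(t:ℂ) - s * Complex.exp ((↑(β1+β2)) * Complex.I)‖
        ≤ ‖(t:ℂ) - u * Complex.exp ((β1:ℝ) * Complex.I)‖
          + ‖(u:ℂ) * Complex.exp ((β1:ℝ) * Complex.I)
              - s * Complex.exp ((↑(β1+β2)) * Complex.I)‖ :=
      norm_sub_le_norm_sub_add_norm_sub _ _ _
    refine key.trans (le_of_eq ?_)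
    have hfac : (u:ℂ) * Complex.exp ((β1:ℝ) * Complex.I)
        - s * Complex.exp ((↑(β1+β2)) * Complex.I)
        = Complex.exp ((β1:ℝ) * Complex.I) * ((u:ℂ) - s * Complex.exp ((β2:ℝ) * Complex.I)) := by
      rw [show ((↑(β1+β2)) * Complex.I : ℂ) = (β1:ℝ)*Complex.I + (β2:ℝ)*Complex.I by
        push_cast; ring, Complex.exp_add]
      ring
    rw [hfac, norm_mul, Complex.norm_exp_ofReal_mul_I, one_mul]
    
  · push_neg at hcase
    have h1 : Real.sqrt (t^2 + s^2 - 2*t*s*Real.cos γ)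
        ≤ Real.sqrt (t^2 + s^2 - 2*t*s*Real.cos Real.pi) :=
      coneAux_mono t s ht hs hγ0 le_rfl hγπ
    have h2 : Real.sqrt (t^2 + s^2 - 2*t*s*Real.cos Real.pi) = t + s := by
      rw [Real.cos_pi]
      rw [show t^2 + s^2 - 2*t*s*(-1) = (t+s)^2 by ring]
      exact Real.sqrt_sq (by linarith)
    -- cos β2 ≤ - cos β1
    have hc2 : Real.cos β2 ≤ - Real.cos β1 := by
      have h3 : Real.pi - β1 ≤ β2 := by linarith
      have := Real.cos_le_cos_of_nonneg_of_le_pi (by linarith) hb2π h3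
      rwa [Real.cos_pi_sub] at this
    have hB : Real.sqrt (s^2 + u^2 + 2*s*u*Real.cos β1)
        ≤ Real.sqrt (u^2 + s^2 - 2*u*s*Real.cos β2) := by
      apply Real.sqrt_le_sqrt
      nlinarith [mul_nonneg hu hs]
    have hplane : t + s ≤ Real.sqrt (t^2 + u^2 - 2*t*u*Real.cos β1)
        + Real.sqrt (s^2 + u^2 + 2*s*u*Real.cos β1) := by
      have e1 := sqrt_eq_cabs t u β1
      have e2 : Real.sqrt (s^2 + u^2 + 2*s*u*Real.cos β1)
          = ‖((-s:ℝ):ℂ) - u * Complex.exp ((β1:ℝ) * Complex.I)‖ := by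
        rw [show s^2 + u^2 + 2*s*u*Real.cos β1
            = (-s)^2 + u^2 - 2*(-s)*u*Real.cos β1 by ring]
        exact sqrt_eq_cabs (-s) u β1
      rw [e1, e2]
      have key : ‖(t:ℂ) - ((-s:ℝ):ℂ)‖
          ≤ ‖(t:ℂ) - u * Complex.exp ((β1:ℝ) * Complex.I)‖
            + ‖(u:ℂ) * Complex.exp ((β1:ℝ) * Complex.I) - ((-s:ℝ):ℂ)‖ :=
        norm_sub_le_norm_sub_add_norm_sub _ _ _
      have h4 : ‖(t:ℂ) - ((-s:ℝ):ℂ)‖ = t + s := by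
        rw [show (t:ℂ) - ((-s:ℝ):ℂ) = ((t + s : ℝ):ℂ) by push_cast; ring,
          Complex.norm_real, Real.norm_eq_abs, abs_of_nonneg (by linarith)]
      have h5 : ‖(u:ℂ) * Complex.exp ((β1:ℝ) * Complex.I) - ((-s:ℝ):ℂ)‖
          = ‖((-s:ℝ):ℂ) - u * Complex.exp ((β1:ℝ) * Complex.I)‖ := by
        rw [← norm_neg]; ring_nf
      rw [h4, h5] at key
      exact key
    calc Real.sqrt (t^2 + s^2 - 2*t*s*Real.cos γ) ≤ t + s := h1.trans_eq h2
      _ ≤ Real.sqrt (t^2 + u^2 - 2*t*u*Real.cos β1)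
          + Real.sqrt (s^2 + u^2 + 2*s*u*Real.cos β1) := hplane
      _ ≤ _ := add_le_add le_rfl hB

private lemma coneDist_eq_zero_iff {S : Type*} [MetricSpace S]
    (hdiam : ∀ x y : S, dist x y ≤ Real.pi) (p q : S × ℝ≥0) :
    coneDist p q = 0 ↔ p.2 = q.2 ∧ (p.2 = 0 ∨ p.1 = q.1) := by
  set t := (p.2 : ℝ) with htdef
  set s := (q.2 : ℝ) with hsdef
  have ht : (0:ℝ) ≤ t := (p.2).coe_nonneg
  have hs : (0:ℝ) ≤ s := (q.2).coe_nonneg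
  have hc1 : Real.cos (dist p.1 q.1) ≤ 1 := Real.cos_le_one _
  constructor
  · intro h
    have hE : t^2 + s^2 - 2*t*s*Real.cos (dist p.1 q.1) ≤ 0 := by
      by_contra hE
      push_neg at hE
      exact absurd h (ne_of_gt (Real.sqrt_pos.mpr hE))
    have hts : t = s := by nlinarith [mul_nonneg ht hs]
    have hts' : p.2 = q.2 := NNReal.coe_injective hts
    refine ⟨hts', ?_⟩
    by_cases ht0 : p.2 = 0
    · exact Or.inl ht0
    · right
      have ht0' : 0 < t := by
        simpa [htdef] using (pos_iff_ne_zero.mpr ht0 : 0 < p.2)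
      have hcos : Real.cos (dist p.1 q.1) = 1 := by
        rw [← hts] at hE
        have h2 : 2*t*t*(1 - Real.cos (dist p.1 q.1)) ≤ 0 := by nlinarith
        have h3 : (0:ℝ) < 2*t*t := by positivity
        have h4 : 1 - Real.cos (dist p.1 q.1) ≤ 0 := by
          by_contra h5
          push_neg at h5
          nlinarith
        linarith
      have hd0 : dist p.1 q.1 = 0 := by
        have h1 : -(2 * Real.pi) < dist p.1 q.1 := by
          have := dist_nonneg (x := p.1) (y := q.1)
          nlinarith [Real.pi_pos]
        have h2 : dist p.1 q.1 < 2 * Real.pi := by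
          have := hdiam p.1 q.1
          nlinarith [Real.pi_pos]
        exact (Real.cos_eq_one_iff_of_lt_of_lt h1 h2).mp hcos
      exact dist_eq_zero.mp hd0
  · rintro ⟨hts, h⟩
    have hts' : t = s := congrArg NNReal.toReal hts
    rcases h with h0 | hxy
    · have : t = 0 := by simp [htdef, h0]
      unfold coneDist
      rw [← htdef, ← hsdef, this, ← hts', this]
      simp
    · unfold coneDist
      rw [← htdef, ← hsdef, hxy, dist_self, Real.cos_zero]
      rw [show t^2 + s^2 - 2*t*s*1 = (t-s)^2 by ring, hts', sub_self]
      simp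

theorem coneDist_pseudometric {S : Type*} [MetricSpace S]
    (hdiam : ∀ x y : S, dist x y ≤ Real.pi) :
    (∀ p q : S × ℝ≥0, 0 ≤ coneDist p q) ∧
    (∀ p q : S × ℝ≥0, coneDist p q = coneDist q p) ∧
    (∀ p q r : S × ℝ≥0, coneDist p r ≤ coneDist p q + coneDist q r) ∧
    (∀ p q : S × ℝ≥0,
      coneDist p q = 0 ↔ p.2 = q.2 ∧ (p.2 = 0 ∨ p.1 = q.1)) ∧
    (∃ m : MetricSpace (Quot (fun p q : S × ℝ≥0 => coneDist p q = 0)),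
      ∀ p q : S × ℝ≥0,
        @dist _ m.toPseudoMetricSpace.toDist
          (Quot.mk _ p) (Quot.mk _ q) = coneDist p q) := by
  have hself : ∀ p : S × ℝ≥0, coneDist p p = 0 := fun p =>
    (coneDist_eq_zero_iff hdiam p p).mpr ⟨rfl, Or.inr rfl⟩
  have keyR : ∀ p q q' : S × ℝ≥0, coneDist q q' = 0 →
      coneDist p q = coneDist p q' := by
    intro p q q' h
    apply le_antisymm
    · have := coneDist_triangle' hdiam p q' q
      rw [coneDist_symm q' q, h] at this
      simpa using this
    · have := coneDist_triangle' hdiam p q q'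
      rw [h] at this
      simpa using this
  have keyL : ∀ p p' q : S × ℝ≥0, coneDist p p' = 0 →
      coneDist p q = coneDist p' q := by
    intro p p' q h
    rw [coneDist_symm p q, coneDist_symm p' q]
    exact keyR q p p' h
  refine ⟨fun p q => Real.sqrt_nonneg _, coneDist_symm,
    coneDist_triangle' hdiam, coneDist_eq_zero_iff hdiam, ?_⟩
  set R := fun p q : S × ℝ≥0 => coneDist p q = 0 with hR
  let d : Quot R → Quot R → ℝ :=
    Quot.lift (fun p => Quot.lift (coneDist p) (fun q q' h => keyR p q q' h))
      (by
        intro p p' h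
        funext x
        induction x using Quot.ind with
        | _ q => exact keyL p p' q h)
  refine ⟨{
    dist := d
    dist_self := by
      intro x
      induction x using Quot.ind with
      | _ p => exact hself p
    dist_comm := by
      intro x y
      induction x using Quot.ind with
      | _ p =>
        induction y using Quot.ind with
        | _ q => exact coneDist_symm p q
    dist_triangle := by
      intro x y z
      induction x using Quot.ind with
      | _ p =>
        induction y using Quot.ind with
        | _ q =>
          induction z using Quot.ind with
          | _ r => exact coneDist_triangle' hdiam p q r
    eq_of_dist_eq_zero := by
      intro x y
      induction x using Quot.ind with
      | _ p =>
        induction y using Quot.ind with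
        | _ q => exact fun h => Quot.sound h }, fun p q => rfl⟩
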